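/- Let X₁, X₂, … be i.i.d. nonnegative random variables with common distribution μ, let θ₁, θ₂, … be positive real thresholds, and let N(ω) = inf{ i ≥ 1 : X_i(ω) ≤ θ_i }. Define Y(ω) = ∑_{i=1}^{N(ω)-1} θ_i + X_{N(ω)}(ω) on {N < ∞} (the time elapsed until the first successfully received update). Then, with all integrals and sums taken in [0,∞], ∫_{{N<∞}} Y dℙ = ∑_{j=1}^∞ ( ∏_{i=1}^{j-1} μ((θ_i,∞)) ) · ∫_{[0,θ_j]} x dμ(x) + ∑_{j=1}^∞ ( ∏_{i=1}^{j} μ((θ_i,∞)) ) · μ([0,θ_{j+1}]) · ( ∑_{i=1}^{j} θ_i ). -/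

import Mathlib

open MeasureTheory ProbabilityTheory

set_option maxHeartbeats 1000000 in
/-- For i.i.d. nonnegative service times `X i` with law `μ` and positive
thresholds `θ i`, letting `N ω = inf {i ≥ 1 : X i ω ≤ θ i}` and
`Y ω = ∑_{i=1}^{N ω - 1} θ i + X (N ω) ω` (the time until the first successful reception),
`∫_{N<∞} Y dP = ∑_{j=1}^∞ (∏_{i=1}^{j-1} μ((θ_i,∞))) ∫_{[0,θ_j]} x dμ
  + ∑_{j=1}^∞ (∏_{i=1}^{j} μ((θ_i,∞))) μ([0,θ_{j+1}]) (∑_{i=1}^j θ_i)`,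
with all integrals and sums taken in `[0,∞]`. -/
theorem stmt_1
    {Ω : Type*} [MeasurableSpace Ω] (P : Measure Ω) [IsProbabilityMeasure P]
    (X : ℕ → Ω → ℝ) (hmeas : ∀ i, Measurable (X i))
    (hindep : iIndepFun X P)
    (μ : Measure ℝ) [IsProbabilityMeasure μ]
    (hdist : ∀ i, Measure.map (X i) P = μ)
    (hnonneg : μ (Set.Iio 0) = 0)
    (θ : ℕ → ℝ) (hθ : ∀ i, 0 < θ i)
    (N : Ω → ℕ) (hN : ∀ ω, N ω = sInf {i : ℕ | 1 ≤ i ∧ X i ω ≤ θ i})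
    (Y : Ω → ℝ) (hY : ∀ ω, Y ω = (∑ i ∈ Finset.Ico 1 (N ω), θ i) + X (N ω) ω) :
    ∫⁻ ω in {ω | ∃ i, 1 ≤ i ∧ X i ω ≤ θ i}, ENNReal.ofReal (Y ω) ∂P
      = (∑' j : ℕ, (∏ i ∈ Finset.Icc 1 j, μ (Set.Ioi (θ i)))
            * ∫⁻ x in Set.Icc 0 (θ (j + 1)), ENNReal.ofReal x ∂μ)
        + ∑' j : ℕ, (∏ i ∈ Finset.Icc 1 (j + 1), μ (Set.Ioi (θ i)))
            * μ (Set.Icc 0 (θ (j + 2)))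
            * ENNReal.ofReal (∑ i ∈ Finset.Icc 1 (j + 1), θ i) := by
  classical
  -- The events `A j` (first j attempts fail) and `F j` (N = j+1)
  set A : ℕ → Set Ω := fun j => ⋂ i ∈ Finset.Ico 1 (j + 1), X i ⁻¹' Set.Ioi (θ i) with hA
  set F : ℕ → Set Ω := fun j => A j ∩ X (j + 1) ⁻¹' Set.Iic (θ (j + 1)) with hF
  have hAmem : ∀ j ω, ω ∈ A j ↔ ∀ i ∈ Finset.Ico 1 (j + 1), θ i < X i ω := by
    intro j ω; simp [hA, Set.mem_iInter]
  have hAmeasSet : ∀ j, MeasurableSet (A j) := by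
    intro j
    exact MeasurableSet.biInter (Finset.Ico 1 (j + 1)).countable_toSet
      (fun i _ => (hmeas i) measurableSet_Ioi)
  have hFmeasSet : ∀ j, MeasurableSet (F j) := fun j =>
    (hAmeasSet j).inter ((hmeas (j + 1)) measurableSet_Iic)
  -- a.e. nonnegativity
  have h0μ : ∀ᵐ x ∂μ, 0 ≤ x := by
    rw [ae_iff]
    have : {x : ℝ | ¬ 0 ≤ x} = Set.Iio 0 := by ext x; exact not_le
    rw [this]; exact hnonneg
  have h0X : ∀ j : ℕ, ∀ᵐ ω ∂P, 0 ≤ X j ω := by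
    intro j
    rw [ae_iff]
    have : {ω | ¬ 0 ≤ X j ω} = X j ⁻¹' Set.Iio 0 := by ext ω; exact not_le
    rw [this, ← Measure.map_apply (hmeas j) measurableSet_Iio, hdist j]
    exact hnonneg
  have hIicAE : ∀ t : ℝ, 0 ≤ t → (Set.Iic t : Set ℝ) =ᵐ[μ] Set.Icc 0 t := by
    intro t _
    filter_upwards [h0μ] with x hx
    simp only [eq_iff_iff, Set.mem_Iic, Set.mem_Icc]
    constructor
    · intro h; exact ⟨hx, h⟩
    · intro h; exact h.2
  -- the target set is the disjoint union of the `F j`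
  have hset : {ω | ∃ i, 1 ≤ i ∧ X i ω ≤ θ i} = ⋃ j, F j := by
    ext ω
    simp only [Set.mem_setOf_eq, Set.mem_iUnion]
    constructor
    · rintro ⟨i, hi1, hile⟩
      have hne : {i : ℕ | 1 ≤ i ∧ X i ω ≤ θ i}.Nonempty := ⟨i, hi1, hile⟩
      have hmemInf := Nat.sInf_mem hne
      obtain ⟨m, hm⟩ : ∃ m, sInf {i : ℕ | 1 ≤ i ∧ X i ω ≤ θ i} = m + 1 :=
        ⟨sInf {i : ℕ | 1 ≤ i ∧ X i ω ≤ θ i} - 1,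
          (Nat.succ_pred_eq_of_pos (lt_of_lt_of_le Nat.zero_lt_one hmemInf.1)).symm⟩
      refine ⟨m, ?_, ?_⟩
      · rw [hAmem]
        intro k hk
        simp only [Finset.mem_Ico] at hk
        by_contra hcon
        push_neg at hcon
        have hkmem : k ∈ {i : ℕ | 1 ≤ i ∧ X i ω ≤ θ i} := ⟨hk.1, hcon⟩
        exact Nat.notMem_of_lt_sInf (by omega : k < sInf {i : ℕ | 1 ≤ i ∧ X i ω ≤ θ i}) hkmem
      · have := hmemInf.2
        rw [hm] at this
        exact this
    · rintro ⟨j, hωA, hωX⟩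
      exact ⟨j + 1, Nat.le_add_left 1 j, hωX⟩
  have hdisjlt : ∀ j k, j < k → Disjoint (F j) (F k) := by
    intro j k hjk
    rw [Set.disjoint_left]
    rintro ω ⟨_, hXj⟩ ⟨hAk, _⟩
    have := (hAmem k ω).1 hAk (j + 1) (by simp [Finset.mem_Ico]; omega)
    exact absurd hXj (not_le.2 this)
  have hdisj : Pairwise (Function.onFun Disjoint F) := by
    intro j k hjk
    rcases hjk.lt_or_gt with h | h
    · exact hdisjlt j k h
    · exact (hdisjlt k j h).symm
  -- on `F j`, `N = j + 1`
  have hNval : ∀ j ω, ω ∈ F j → N ω = j + 1 := by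
    intro j ω hω
    obtain ⟨hωA, hωX⟩ := hω
    have hj1 : (j + 1) ∈ {i : ℕ | 1 ≤ i ∧ X i ω ≤ θ i} := ⟨Nat.le_add_left 1 j, hωX⟩
    have hlow : ∀ i ∈ {i : ℕ | 1 ≤ i ∧ X i ω ≤ θ i}, j + 1 ≤ i := by
      intro i hi
      by_contra hcon
      push_neg at hcon
      have := (hAmem j ω).1 hωA i (by simp [Finset.mem_Ico]; exact ⟨hi.1, by omega⟩)
      exact absurd hi.2 (not_le.2 this)
    rw [hN ω]
    exact le_antisymm (Nat.sInf_le hj1) (hlow _ (Nat.sInf_mem ⟨_, hj1⟩))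
  -- key independence computation
  have key : ∀ (j : ℕ) (g : ℝ → ENNReal), Measurable g →
      ∫⁻ ω, (A j).indicator 1 ω * g (X (j + 1) ω) ∂P
        = (∏ i ∈ Finset.Icc 1 j, μ (Set.Ioi (θ i))) * ∫⁻ x, g x ∂μ := by
    intro j g hg
    set S : Finset ℕ := Finset.Ico 1 (j + 1) with hS
    have hST : Disjoint S ({j + 1} : Finset ℕ) := by
      simp [hS, Finset.disjoint_singleton_right]
    have hIndep : IndepFun (fun ω (i : S) => X i ω) (fun ω (i : ({j+1} : Finset ℕ)) => X i ω) P :=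
      hindep.indepFun_finset S {j + 1} hST hmeas
    set T : Set ((i : S) → ℝ) := {v | ∀ i : S, θ i < v i} with hT
    have hTmeas : MeasurableSet T := by
      have : T = ⋂ i : S, (fun v : (i : S) → ℝ => v i) ⁻¹' Set.Ioi (θ i) := by
        ext v; simp [hT, Set.mem_iInter]
      rw [this]
      exact MeasurableSet.iInter fun i => (measurable_pi_apply i) measurableSet_Ioi
    set φ : ((i : S) → ℝ) → ENNReal := fun v => T.indicator 1 v with hφ
    set ψ : ((i : ({j+1} : Finset ℕ)) → ℝ) → ENNReal :=
      fun v => g (v ⟨j + 1, Finset.mem_singleton_self _⟩) with hψ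
    have hφm : Measurable φ := measurable_const.indicator hTmeas
    have hψm : Measurable ψ := hg.comp (measurable_pi_apply _)
    have hIndep2 : IndepFun (fun ω => φ (fun i : S => X i ω))
        (fun ω => ψ (fun i : ({j+1} : Finset ℕ) => X i ω)) P :=
      hIndep.comp hφm hψm
    have hfeq : ∀ ω, φ (fun i : S => X i ω) = (A j).indicator 1 ω := by
      intro ω
      by_cases hω : ω ∈ A j
      · have hωT : (fun i : S => X i ω) ∈ T := by
          intro i
          exact (hAmem j ω).1 hω i i.2
        simp [hφ, Set.indicator_of_mem hωT, Set.indicator_of_mem hω]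
      · have hωT : (fun i : S => X i ω) ∉ T := by
          intro hcon
          apply hω
          rw [hAmem]
          intro i hi
          exact hcon ⟨i, hi⟩
        simp [hφ, Set.indicator_of_notMem hωT, Set.indicator_of_notMem hω]
      -- (end pointwise identification)
    have hgeq : ∀ ω, ψ (fun i : ({j+1} : Finset ℕ) => X i ω) = g (X (j + 1) ω) := by
      intro ω; simp [hψ]
    have hmul := lintegral_mul_eq_lintegral_mul_lintegral_of_indepFun
      (hφm.comp (measurable_pi_lambda _ fun i : S => hmeas i))
      (hψm.comp (measurable_pi_lambda _ fun i : ({j+1} : Finset ℕ) => hmeas i)) hIndep2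
    have hL : ∫⁻ ω, (A j).indicator 1 ω * g (X (j + 1) ω) ∂P
        = (∫⁻ ω, φ (fun i : S => X i ω) ∂P) * ∫⁻ ω, ψ (fun i : ({j+1} : Finset ℕ) => X i ω) ∂P := by
      simp only [Pi.mul_apply, Function.comp_apply] at hmul
      rw [← hmul]
      exact lintegral_congr fun ω => by rw [hfeq ω, hgeq ω]
    rw [hL]
    congr 1
    · -- ∫ indicator of A j = ∏ μ(Ioi θ i)
      rw [lintegral_congr hfeq, lintegral_indicator_one (hAmeasSet j)]
      have := hindep.meas_biInter (S := S)
        (s := fun i => X i ⁻¹' Set.Ioi (θ i))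
        (fun i _ => ⟨Set.Ioi (θ i), measurableSet_Ioi, rfl⟩)
      rw [hA]
      rw [this]
      rw [hS, Finset.Ico_add_one_right_eq_Icc]
      refine Finset.prod_congr rfl fun i _ => ?_
      rw [← Measure.map_apply (hmeas i) measurableSet_Ioi, hdist i]
    · -- ∫ g ∘ X_{j+1} = ∫ g dμ
      rw [lintegral_congr hgeq, ← hdist (j + 1), lintegral_map hg (hmeas (j + 1))]
  -- per-index evaluation of the integral over F j
  have hstep : ∀ j : ℕ, ∫⁻ ω in F j, ENNReal.ofReal (Y ω) ∂P
      = (∏ i ∈ Finset.Icc 1 j, μ (Set.Ioi (θ i)))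
          * ∫⁻ x in Set.Icc 0 (θ (j + 1)), ENNReal.ofReal x ∂μ
        + ENNReal.ofReal (∑ i ∈ Finset.Ico 1 (j + 1), θ i)
          * ((∏ i ∈ Finset.Icc 1 j, μ (Set.Ioi (θ i))) * μ (Set.Icc 0 (θ (j + 1)))) := by
    intro j
    set c : ℝ := ∑ i ∈ Finset.Ico 1 (j + 1), θ i with hc
    have hc0 : 0 ≤ c := Finset.sum_nonneg fun i _ => (hθ i).le
    set g : ℝ → ENNReal :=
      (Set.Iic (θ (j + 1))).indicator (fun x => ENNReal.ofReal c + ENNReal.ofReal x) with hg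
    have hgmeas : Measurable g :=
      (measurable_const.add (ENNReal.measurable_ofReal.comp measurable_id)).indicator
        measurableSet_Iic
    have hae : (F j).indicator (fun ω => ENNReal.ofReal (Y ω))
        =ᵐ[P] fun ω => (A j).indicator 1 ω * g (X (j + 1) ω) := by
      filter_upwards [h0X (j + 1)] with ω hω0
      by_cases hωF : ω ∈ F j
      · obtain ⟨hωA, hωX⟩ := hωF
        have hNω := hNval j ω (Set.mem_inter hωA hωX)
        rw [Set.indicator_of_mem (Set.mem_inter hωA hωX), Set.indicator_of_mem hωA, hg,
          Set.indicator_of_mem (show X (j + 1) ω ∈ Set.Iic (θ (j + 1)) from hωX),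
          hY ω, hNω, ENNReal.ofReal_add hc0 hω0]
        simp [hc]
      · rw [Set.indicator_of_notMem hωF]
        by_cases hωA : ω ∈ A j
        · have hωX : X (j + 1) ω ∉ Set.Iic (θ (j + 1)) := fun h => hωF ⟨hωA, h⟩
          rw [hg, Set.indicator_of_notMem hωX, mul_zero]
        · simp [Set.indicator_of_notMem hωA]
    rw [← lintegral_indicator (hFmeasSet j), lintegral_congr_ae hae, key j g hgmeas]
    have hgint : ∫⁻ x, g x ∂μ
        = ∫⁻ x in Set.Icc 0 (θ (j + 1)), ENNReal.ofReal x ∂μ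
          + ENNReal.ofReal c * μ (Set.Icc 0 (θ (j + 1))) := by
      rw [hg, lintegral_indicator measurableSet_Iic,
        setLIntegral_congr (hIicAE (θ (j + 1)) (hθ (j + 1)).le),
        lintegral_add_left measurable_const, setLIntegral_const, add_comm]
    rw [hgint]
    ring
  -- assemble
  rw [hset, lintegral_iUnion hFmeasSet hdisj]
  rw [tsum_congr hstep]
  rw [ENNReal.tsum_add]
  congr 1
  rw [tsum_eq_zero_add' ENNReal.summable]
  have h00 : ENNReal.ofReal (∑ i ∈ Finset.Ico 1 (0 + 1), θ i)
      * ((∏ i ∈ Finset.Icc 1 0, μ (Set.Ioi (θ i))) * μ (Set.Icc 0 (θ (0 + 1)))) = 0 := by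
    simp
  rw [h00, zero_add]
  refine tsum_congr fun j => ?_
  rw [show j + 1 + 1 = j + 2 from rfl, (show Finset.Ico 1 (j + 2) = Finset.Icc 1 (j + 1) from Finset.Ico_add_one_right_eq_Icc (a := 1) (b := j + 1))]
  ring
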